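/- (Upper bound on the tightening constant when the intersection is nonempty) Let t = (t₁, …, tₘ) be a weight vector with tᵢ ≥ 0 and Σᵢ tᵢ = 1. If the intersection F = ⋂_{i=1}^m E(xᵢ,Pᵢ) is nonempty, then δ_t ≤ 1. -/

import Mathlib

open Matrix

/-- (Upper bound on the tightening constant when the intersection is nonempty) For weights
`tᵢ ≥ 0` with `Σᵢ tᵢ = 1`, if the intersection `F = ⋂ᵢ E(xᵢ, Pᵢ)` is nonempty then
`δ_t ≤ 1`. -/
theorem tightening_constant_le_one (n m : ℕ) (hn : 0 < n) (hm : 0 < m)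
    (x : Fin m → (Fin n → ℝ)) (P : Fin m → Matrix (Fin n) (Fin n) ℝ)
    (hP : ∀ i, (P i).PosDef)
    (t : Fin m → ℝ) (ht : ∀ i, 0 ≤ t i) (hts : ∑ i, t i = 1)
    (Ptinv : Matrix (Fin n) (Fin n) ℝ) (hPtinv : Ptinv = ∑ i, t i • (P i)⁻¹)
    (xt : Fin n → ℝ) (hxt : xt = Ptinv⁻¹ *ᵥ (∑ i, t i • ((P i)⁻¹ *ᵥ x i)))
    (δ : ℝ) (hδ : δ = (∑ i, t i * (x i ⬝ᵥ ((P i)⁻¹ *ᵥ x i))) - xt ⬝ᵥ (Ptinv *ᵥ xt))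
    (hF : ∃ y : Fin n → ℝ, ∀ i, (y - x i) ⬝ᵥ ((P i)⁻¹ *ᵥ (y - x i)) ≤ 1) :
    δ ≤ 1 := by
  obtain ⟨y, hy⟩ := hF
  have hMpd : ∀ i, ((P i)⁻¹).PosDef := fun i => (hP i).inv
  have hMpsd : ∀ i (v : Fin n → ℝ), 0 ≤ v ⬝ᵥ (P i)⁻¹ *ᵥ v := by
    intro i v
    have := (hMpd i).posSemidef.dotProduct_mulVec_nonneg v
    simpa using this
  have hsym : ∀ i (a b : Fin n → ℝ), a ⬝ᵥ (P i)⁻¹ *ᵥ b = b ⬝ᵥ (P i)⁻¹ *ᵥ a := by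
    intro i a b
    have hT : ((P i)⁻¹)ᵀ = (P i)⁻¹ := by simpa using (hMpd i).1.eq
    rw [dotProduct_mulVec, ← mulVec_transpose, hT, dotProduct_comm]
  -- helper: dot product with a sum
  have hdp : ∀ (f : Fin m → Fin n → ℝ) (v : Fin n → ℝ),
      v ⬝ᵥ (∑ i, f i) = ∑ i, v ⬝ᵥ f i := by
    intro f v
    simp only [dotProduct, Finset.sum_apply, Finset.mul_sum]
    rw [Finset.sum_comm]
  -- helper: sum of matrices mulVec
  have hmv : ∀ (A : Fin m → Matrix (Fin n) (Fin n) ℝ) (v : Fin n → ℝ),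
      (∑ i, A i) *ᵥ v = ∑ i, A i *ᵥ v := by
    intro A v
    funext k
    simp only [mulVec, dotProduct, Matrix.sum_apply, Finset.sum_apply, Finset.sum_mul]
    rw [Finset.sum_comm]
  have hquad : ∀ (a b : Fin n → ℝ), a ⬝ᵥ Ptinv *ᵥ b = ∑ i, t i * (a ⬝ᵥ (P i)⁻¹ *ᵥ b) := by
    intro a b
    rw [hPtinv, hmv, hdp]
    exact Finset.sum_congr rfl fun i _ => by
      rw [smul_mulVec, dotProduct_smul, smul_eq_mul]
  -- some weight is positive
  obtain ⟨j, hj⟩ : ∃ j, 0 < t j := by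
    by_contra h
    push_neg at h
    have h0 : ∑ i, t i = 0 := Finset.sum_eq_zero fun i _ => le_antisymm (h i) (ht i)
    rw [h0] at hts
    norm_num at hts
  -- Ptinv is positive definite
  have hQpd : Ptinv.PosDef := by
    refine PosDef.of_dotProduct_mulVec_pos ?_ ?_
    · show Ptinvᴴ = Ptinv
      rw [hPtinv, conjTranspose_sum]
      exact Finset.sum_congr rfl fun i _ => by
        rw [conjTranspose_smul,
          show ((P i)⁻¹)ᴴ = (P i)⁻¹ from (hMpd i).1.eq]
        norm_num
    · intro v hv
      have hvq : 0 < v ⬝ᵥ Ptinv *ᵥ v := by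
        rw [hquad]
        apply Finset.sum_pos'
        · intro i _
          exact mul_nonneg (ht i) (hMpsd i v)
        · refine ⟨j, Finset.mem_univ j, ?_⟩
          have hq : 0 < v ⬝ᵥ (P j)⁻¹ *ᵥ v := by simpa using (hMpd j).dotProduct_mulVec_pos hv
          exact mul_pos hj hq
      simpa using hvq
  have hsymQ : ∀ (a b : Fin n → ℝ), a ⬝ᵥ Ptinv *ᵥ b = b ⬝ᵥ Ptinv *ᵥ a := by
    intro a b
    have hT : Ptinvᵀ = Ptinv := by simpa using hQpd.1.eq
    rw [dotProduct_mulVec, ← mulVec_transpose, hT, dotProduct_comm]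
  -- Ptinv *ᵥ xt recovers the weighted sum
  have hb : Ptinv *ᵥ xt = ∑ i, t i • ((P i)⁻¹ *ᵥ x i) := by
    rw [hxt, mulVec_mulVec, Matrix.mul_nonsing_inv _ (isUnit_iff_ne_zero.mpr hQpd.det_pos.ne'),
      one_mulVec]
  have hyb : y ⬝ᵥ Ptinv *ᵥ xt = ∑ i, t i * (y ⬝ᵥ (P i)⁻¹ *ᵥ x i) := by
    rw [hb, hdp]
    exact Finset.sum_congr rfl fun i _ => by rw [dotProduct_smul, smul_eq_mul]
  -- expansion of quadratic in a difference
  have expand : ∀ (Q : Matrix (Fin n) (Fin n) ℝ),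
      (∀ a b, a ⬝ᵥ Q *ᵥ b = b ⬝ᵥ Q *ᵥ a) → ∀ (a c : Fin n → ℝ),
      (a - c) ⬝ᵥ Q *ᵥ (a - c) = a ⬝ᵥ Q *ᵥ a - 2 * (a ⬝ᵥ Q *ᵥ c) + c ⬝ᵥ Q *ᵥ c := by
    intro Q hQ a c
    rw [mulVec_sub, sub_dotProduct, dotProduct_sub, dotProduct_sub, hQ c a]
    ring
  set S : ℝ := ∑ i, t i * ((y - x i) ⬝ᵥ (P i)⁻¹ *ᵥ (y - x i)) with hSdef
  have hS : S = (∑ i, t i * (y ⬝ᵥ (P i)⁻¹ *ᵥ y)) - 2 * (∑ i, t i * (y ⬝ᵥ (P i)⁻¹ *ᵥ x i))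
      + ∑ i, t i * (x i ⬝ᵥ (P i)⁻¹ *ᵥ x i) := by
    rw [hSdef]
    rw [show (∑ i, t i * ((y - x i) ⬝ᵥ (P i)⁻¹ *ᵥ (y - x i)))
        = ∑ i, (t i * (y ⬝ᵥ (P i)⁻¹ *ᵥ y) - 2 * (t i * (y ⬝ᵥ (P i)⁻¹ *ᵥ x i))
          + t i * (x i ⬝ᵥ (P i)⁻¹ *ᵥ x i)) from
      Finset.sum_congr rfl fun i _ => by rw [expand _ (hsym i)]; ring]
    rw [Finset.sum_add_distrib, Finset.sum_sub_distrib, ← Finset.mul_sum]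
  have hkey : S = (y - xt) ⬝ᵥ Ptinv *ᵥ (y - xt) + δ := by
    rw [expand Ptinv hsymQ, hδ, hS, hquad y y, hyb]
    ring
  have h1 : S ≤ 1 := by
    calc S ≤ ∑ i, t i * 1 := Finset.sum_le_sum fun i _ =>
            mul_le_mul_of_nonneg_left (hy i) (ht i)
      _ = 1 := by simp [hts]
  have h2 : 0 ≤ (y - xt) ⬝ᵥ Ptinv *ᵥ (y - xt) := by
    have := hQpd.posSemidef.dotProduct_mulVec_nonneg (y - xt)
    simpa using this
  linarith [hkey ▸ h1]
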